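/- Let T be a tree and let T' be obtained from T by (i) subdividing every edge once and (ii) attaching ℓ new pendant leaves to every original vertex of T. Then td(T') ≤ td(T) + 1. -/

import Mathlib

/-- An elimination forest of height at most `h`. -/
def ElimForestLE {V : Type*} (G : SimpleGraph V) (h : ℕ) : Prop :=
  ∃ le : V → V → Prop, IsPartialOrder V le ∧
    (∀ v : V, IsChain le {u | le u v}) ∧
    (∀ u v : V, G.Adj u v → le u v ∨ le v u) ∧
    (∀ v : V, {u | le u v}.ncard ≤ h)

/-- The treedepth of a graph: the minimum height of an elimination forest. -/
noncomputable def treedepth {V : Type*} (G : SimpleGraph V) : ℕ :=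
  sInf {h | ElimForestLE G h}

/-- The edges of `T` oriented from the smaller endpoint to the larger one. -/
def OrientedEdges {V : Type*} [LinearOrder V] (T : SimpleGraph V) : Type _ :=
  {p : V × V // T.Adj p.1 p.2 ∧ p.1 < p.2}

/-- The graph `T'` obtained from `T` by subdividing every edge once (the new
vertex `w_e` of edge `e` is adjacent exactly to the two endpoints of `e`) and
attaching `ℓ` new pendant leaves to every original vertex of `T`. -/
def Gadget {V : Type*} [LinearOrder V] (T : SimpleGraph V) (ℓ : ℕ) :
    SimpleGraph (V ⊕ (OrientedEdges T ⊕ V × Fin ℓ)) :=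
  SimpleGraph.fromRel (fun x y =>
    match x, y with
    | Sum.inl u, Sum.inr (Sum.inl e) => u = e.1.1 ∨ u = e.1.2
    | Sum.inl u, Sum.inr (Sum.inr (v, _)) => u = v
    | _, _ => False)

/-- If `T'` is obtained from a tree `T` by subdividing every
edge once and attaching `ℓ` pendant leaves to every original vertex, then
`td(T') ≤ td(T) + 1`. -/
theorem stmt_9 {V : Type} [Fintype V] [LinearOrder V] (T : SimpleGraph V)
    (hT : T.IsTree) (ℓ : ℕ) :
    treedepth (Gadget T ℓ) ≤ treedepth T + 1 := by
    classical
  have hne : ElimForestLE T (Fintype.card V) := by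
    refine ⟨(· ≤ ·), inferInstance, fun v => fun a _ b _ _ => le_total a b,
      fun u v _ => le_total u v, fun v => ?_⟩
    calc {u | u ≤ v}.ncard ≤ (Set.univ : Set V).ncard :=
          Set.ncard_le_ncard (Set.subset_univ _) Set.finite_univ
      _ = Fintype.card V := by rw [Set.ncard_univ, Nat.card_eq_fintype_card]
  have hmem : ElimForestLE T (treedepth T) := Nat.sInf_mem (s := {h | ElimForestLE T h}) ⟨_, hne⟩
  obtain ⟨le, hpo, hchain, hadj, hcard⟩ := hmem
  have hrefl : ∀ a, le a a := hpo.toIsPreorder.toRefl.refl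
  have htrans : ∀ a b c, le a b → le b c → le a c :=
    fun a b c => hpo.toIsPreorder.toIsTrans.trans a b c
  have hanti : ∀ a b, le a b → le b a → a = b :=
    fun a b => hpo.toAntisymm.antisymm a b
  set d : OrientedEdges T → V := fun e => if le e.1.1 e.1.2 then e.1.2 else e.1.1 with hd
  have hde : ∀ e : OrientedEdges T, le e.1.1 (d e) ∧ le e.1.2 (d e) := by
    intro e
    rcases hadj _ _ e.2.1 with h | h
    · simp only [hd, if_pos h]; exact ⟨h, hrefl _⟩
    · by_cases h' : le e.1.1 e.1.2
      · simp only [hd, if_pos h']; exact ⟨h', hrefl _⟩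
      · simp only [hd, if_neg h']; exact ⟨hrefl _, h⟩
  set base : OrientedEdges T ⊕ V × Fin ℓ → V := Sum.elim d (fun p => p.1) with hbase
  set le' : (V ⊕ (OrientedEdges T ⊕ V × Fin ℓ)) → (V ⊕ (OrientedEdges T ⊕ V × Fin ℓ)) → Prop :=
    fun x y => match x, y with
    | Sum.inl u, Sum.inl v => le u v
    | Sum.inl u, Sum.inr z => le u (base z)
    | Sum.inr z, Sum.inr z' => z = z'
    | Sum.inr _, Sum.inl _ => False with hle'
  have hsetl : ∀ v : V, {u | le' u (Sum.inl v)} = Sum.inl '' {u | le u v} := by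
    intro v; ext w; rcases w with w | w <;> simp [hle']
  have hsetr : ∀ z, {u | le' u (Sum.inr z)}
      = insert (Sum.inr z) (Sum.inl '' {u | le u (base z)}) := by
    intro z; ext w; rcases w with w | w <;> simp [hle']
  apply Nat.sInf_le
  have hpo' : IsPartialOrder (V ⊕ (OrientedEdges T ⊕ V × Fin ℓ)) le' :=
    { refl := by rintro (u | z); exacts [hrefl u, rfl]
      trans := by
        rintro (a | a) (b | b) (c | c) h1 h2
        · exact htrans _ _ _ h1 h2
        · exact htrans _ _ _ h1 h2
        · exact h2.elim
        · exact h2 ▸ h1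
        · exact h1.elim
        · exact h1.elim
        · exact h2.elim
        · exact h1.trans h2
      antisymm := by
        rintro (a | a) (b | b) h1 h2
        · exact congrArg _ (hanti _ _ h1 h2)
        · exact h2.elim
        · exact h1.elim
        · exact congrArg _ h1 }
  refine ⟨le', hpo', ?_, ?_, ?_⟩
  · rintro (v | z)
    · rw [hsetl]
      exact (hchain v).image_of_map_rel le le' Sum.inl (fun a b h => h)
    · rw [hsetr]
      rintro x hx y hy hxy
      rcases hx with rfl | ⟨a, ha, rfl⟩
      · rcases hy with rfl | ⟨b, hb, rfl⟩
        · exact absurd rfl hxy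
        · right; exact hb
      · rcases hy with rfl | ⟨b, hb, rfl⟩
        · left; exact ha
        · have := hchain (base z) ha hb (by simpa using hxy)
          rcases this with h | h
          · exact Or.inl h
          · exact Or.inr h
  · rintro (u | z) (v | z') h <;>
      simp only [Gadget, SimpleGraph.fromRel_adj] at h
    · rcases h.2 with h | h <;> exact h.elim
    · rcases z' with e | ⟨w, i⟩
      · rcases h.2 with (h | h) | h
        · subst h; exact Or.inl (hde e).1
        · subst h; exact Or.inl (hde e).2
        · exact h.elim
      · rcases h.2 with h | h
        · subst h; exact Or.inl (hrefl _)
        · exact h.elim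
    · rcases z with e | ⟨w, i⟩
      · rcases h.2 with h | (h | h)
        · exact h.elim
        · subst h; exact Or.inr (hde e).1
        · subst h; exact Or.inr (hde e).2
      · rcases h.2 with h | h
        · exact h.elim
        · subst h; exact Or.inr (hrefl _)
    · rcases h.2 with h | h <;> exact h.elim
  · rintro (v | z)
    · rw [hsetl, Set.ncard_image_of_injective _ Sum.inl_injective]
      exact (hcard v).trans (Nat.le_succ _)
    · rw [hsetr]
      calc (insert (Sum.inr z : V ⊕ (OrientedEdges T ⊕ V × Fin ℓ))
            (Sum.inl '' {u | le u (base z)})).ncard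
          ≤ (Sum.inl '' {u | le u (base z)}).ncard + 1 := Set.ncard_insert_le _ _
        _ ≤ treedepth T + 1 := by
            rw [Set.ncard_image_of_injective _ Sum.inl_injective]
            exact Nat.add_le_add_right (hcard _) 1
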